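/- For α, β > 0 define d_α = −2α/(9(3α+1)²(3α+2)), v_β = β(5β²+5β+1)/(8(1+2β)²(1+4β)²(3+4β)), w_β = β³/(8(1+2β)²(1+4β)²(3+4β)), and u_β = −β²/(16(1+2β)(1+4β)²(3+4β)), and let D_{α,β} be the 6×6 real matrix with rows: (0, 0, 0, d_α, d_α, d_α), (0, d_α, d_α, 0, 0, d_α), (d_α, 0, d_α, 0, d_α, 0), (d_α, d_α, 0, d_α, 0, 0), (v_β, u_β, u_β, u_β, u_β, w_β), (u_β, v_β, u_β, u_β, w_β, u_β). Then det(D_{α,β}) = α⁴β² / (2 · (3(3α+1))⁸ (3α+2)⁴ (2β+1)² (4β+1)² (4β+3)²), which is strictly positive for all α, β > 0; in particular D_{α,β} has rank 6. -/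

import Mathlib

noncomputable section

def dA (α : ℝ) : ℝ := -(2 * α) / (9 * (3 * α + 1) ^ 2 * (3 * α + 2))

def vB (β : ℝ) : ℝ :=
  β * (5 * β ^ 2 + 5 * β + 1) / (8 * (1 + 2 * β) ^ 2 * (1 + 4 * β) ^ 2 * (3 + 4 * β))

def wB (β : ℝ) : ℝ := β ^ 3 / (8 * (1 + 2 * β) ^ 2 * (1 + 4 * β) ^ 2 * (3 + 4 * β))

def uB (β : ℝ) : ℝ := -(β ^ 2) / (16 * (1 + 2 * β) * (1 + 4 * β) ^ 2 * (3 + 4 * β))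

/-- The matrix `D_{α,β}` of the Dirichlet face–volume enrichment functionals with respect to
the basis `(λ₁λ₂, λ₁λ₃, λ₁λ₄, λ₂λ₃, λ₂λ₄, λ₃λ₄)`. -/
def Dfv (α β : ℝ) : Matrix (Fin 6) (Fin 6) ℝ :=
  !![0, 0, 0, dA α, dA α, dA α;
     0, dA α, dA α, 0, 0, dA α;
     dA α, 0, dA α, 0, dA α, 0;
     dA α, dA α, 0, dA α, 0, 0;
     vB β, uB β, uB β, uB β, uB β, wB β;
     uB β, vB β, uB β, uB β, wB β, uB β]

set_option maxRecDepth 40000 in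
set_option maxHeartbeats 4000000 in
/-- The determinant of the generic pattern matrix. -/
theorem det_pattern (d v w u : ℝ) :
    (!![0, 0, 0, d, d, d;
       0, d, d, 0, 0, d;
       d, 0, d, 0, d, 0;
       d, d, 0, d, 0, 0;
       v, u, u, u, u, w;
       u, v, u, u, w, u] : Matrix (Fin 6) (Fin 6) ℝ).det =
    2 * d ^ 4 * (v + w - 2 * u) ^ 2 := by
  simp [Matrix.det_succ_row_zero, Fin.sum_univ_succ, Fin.succAbove,
    Matrix.submatrix_apply, Fin.castSucc, Fin.castAdd, Fin.castLE, Fin.ext_iff]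
  norm_num [Fin.succ, Fin.ext_iff, show ((3 : Fin 6) : ℕ) = 3 from rfl,
    show ((3 : Fin 5) : ℕ) = 3 from rfl, show ((3 : Fin 4) : ℕ) = 3 from rfl]
  ring

set_option maxRecDepth 40000 in
/-- Determinant formula for `D_{α,β}`: it is strictly positive for all `α, β > 0`, hence
`D_{α,β}` has full rank 6. -/
theorem Dfv_det_pos_rank_six (α β : ℝ) (hα : 0 < α) (hβ : 0 < β) :
    (Dfv α β).det =
        α ^ 4 * β ^ 2 /
          (2 * (3 * (3 * α + 1)) ^ 8 * (3 * α + 2) ^ 4 * (2 * β + 1) ^ 2 *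
            (4 * β + 1) ^ 2 * (4 * β + 3) ^ 2) ∧
      0 < (Dfv α β).det ∧ (Dfv α β).rank = 6 := by
  have ha1 : (3 * α + 1) ≠ 0 := by positivity
  have ha2 : (3 * α + 2) ≠ 0 := by positivity
  have hb1 : (1 + 2 * β) ≠ 0 := by positivity
  have hb2 : (1 + 4 * β) ≠ 0 := by positivity
  have hb3 : (3 + 4 * β) ≠ 0 := by positivity
  have hb1' : (2 * β + 1) ≠ 0 := by positivity
  have hb2' : (4 * β + 1) ≠ 0 := by positivity
  have hb3' : (4 * β + 3) ≠ 0 := by positivity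
  have key : (Dfv α β).det =
      α ^ 4 * β ^ 2 /
        (2 * (3 * (3 * α + 1)) ^ 8 * (3 * α + 2) ^ 4 * (2 * β + 1) ^ 2 *
          (4 * β + 1) ^ 2 * (4 * β + 3) ^ 2) := by
    have hdet : (Dfv α β).det = 2 * (dA α) ^ 4 * (vB β + wB β - 2 * uB β) ^ 2 := by
      rw [Dfv]; exact det_pattern (dA α) (vB β) (wB β) (uB β)
    rw [hdet]
    unfold dA vB wB uB
    field_simp
    ring
  have hpos : 0 < (Dfv α β).det := by
    rw [key]; positivity
  refine ⟨key, hpos, ?_⟩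
  have hunit : IsUnit (Dfv α β) :=
    (Matrix.isUnit_iff_isUnit_det _).2 (isUnit_iff_ne_zero.2 (ne_of_gt hpos))
  rw [Matrix.rank_of_isUnit _ hunit]
  simp

end
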